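/- Let p_0, p_1, … be pairwise distinct propositional atoms and let 𝒯 = { Cn({p_i}) : i ∈ ℕ }. Then 𝒯 is a countable family of finitely generated non-including theories, and 𝒯 is not representable by any default theory: there is no default theory (D,W) with ext(D,W) = 𝒯. -/

import Mathlib

/-- Propositional formulas over a set of atoms `α`. -/
inductive PropForm (α : Type) : Type
  | atom : α → PropForm α
  | fls  : PropForm α
  | impl : PropForm α → PropForm α → PropForm α

namespace PropForm

/-- Negation `¬φ`, definable as `φ → ⊥`. -/
def neg {α : Type} (φ : PropForm α) : PropForm α := impl φ fls

/-- Conjunction, definable from implication and falsum. -/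
def conj {α : Type} (φ ψ : PropForm α) : PropForm α := (φ.impl ψ.neg).neg

/-- Biimplication `φ ↔ ψ`. -/
def biimp {α : Type} (φ ψ : PropForm α) : PropForm α := conj (φ.impl ψ) (ψ.impl φ)

/-- Evaluation of a formula under a valuation of the atoms. -/
def eval {α : Type} (v : α → Prop) : PropForm α → Prop
  | atom a   => v a
  | fls      => False
  | impl φ ψ => eval v φ → eval v ψ

/-- Renaming/embedding of atoms. -/
def map {α β : Type} (f : α → β) : PropForm α → PropForm β
  | atom a   => atom (f a)
  | fls      => fls
  | impl φ ψ => impl (map f φ) (map f ψ)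

end PropForm

/-- Classical propositional consequence operator. -/
def Cn {α : Type} (S : Set (PropForm α)) : Set (PropForm α) :=
  {φ | ∀ v : α → Prop, (∀ ψ ∈ S, ψ.eval v) → φ.eval v}

/-- A theory: a set of formulas closed under propositional consequence. -/
def IsTheory {α : Type} (S : Set (PropForm α)) : Prop := Cn S ⊆ S

/-- A set of formulas is consistent if its consequences are not the whole language. -/
def Consistent {α : Type} (S : Set (PropForm α)) : Prop := Cn S ≠ Set.univ

/-- A default `α : Γ / β` with prerequisite, finite set of justifications, consequent. -/
structure Default (α : Type) where
  pre : PropForm α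
  jus : Finset (PropForm α)
  con : PropForm α

/-- A default is applicable w.r.t. `S` if no justification's negation follows from `S`. -/
def Default.Applicable {α : Type} (S : Set (PropForm α)) (d : Default α) : Prop :=
  ∀ γ ∈ d.jus, γ.neg ∉ Cn S

/-- The reduct of `D` w.r.t. `S`: the monotone rules `pre/con` of `S`-applicable defaults. -/
def Reduct {α : Type} (D : Set (Default α)) (S : Set (PropForm α)) :
    Set (PropForm α × PropForm α) :=
  {r | ∃ d ∈ D, d.Applicable S ∧ r = (d.pre, d.con)}

/-- `Cn^B(W)`: consequences of `W` in propositional calculus augmented with rules `B`;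
the least set containing `W`, closed under `Cn`, and closed under the rules of `B`. -/
def CnRules {α : Type} (B : Set (PropForm α × PropForm α)) (W : Set (PropForm α)) :
    Set (PropForm α) :=
  ⋂₀ {S | W ⊆ S ∧ Cn S ⊆ S ∧ ∀ r ∈ B, r.1 ∈ S → r.2 ∈ S}

/-- `S` is an extension of the default theory `(D, W)`. -/
def IsExtension {α : Type} (D : Set (Default α)) (W S : Set (PropForm α)) : Prop :=
  S = CnRules (Reduct D S) W

/-- The family of all extensions of `(D, W)`. -/
def ext {α : Type} (D : Set (Default α)) (W : Set (PropForm α)) : Set (Set (PropForm α)) :=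
  {S | IsExtension D W S}

/-- A default is prerequisite-free if its prerequisite is a tautology. -/
def Default.PrereqFree {α : Type} (d : Default α) : Prop :=
  d.pre ∈ Cn (∅ : Set (PropForm α))

/-- A default is normal if it has the form `α : {β} / β`. -/
def Default.Normal {α : Type} (d : Default α) : Prop := d.jus = {d.con}


section Aux

open PropForm

variable {α : Type}

lemma subset_Cn (S : Set (PropForm α)) : S ⊆ Cn S := fun φ hφ v hv => hv φ hφ

lemma Cn_mono {S T : Set (PropForm α)} (h : S ⊆ T) : Cn S ⊆ Cn T :=
  fun φ hφ v hv => hφ v (fun ψ hψ => hv ψ (h hψ))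

lemma Cn_Cn (S : Set (PropForm α)) : Cn (Cn S) ⊆ Cn S :=
  fun φ hφ v hv => hφ v (fun ψ hψ => hψ v hv)

lemma Cn_idem (S : Set (PropForm α)) : Cn (Cn S) = Cn S :=
  Set.Subset.antisymm (Cn_Cn S) (subset_Cn _)

/-- Atoms occurring in a formula. -/
def atomsOf : PropForm α → Set α
  | .atom a => {a}
  | .fls => ∅
  | .impl φ ψ => atomsOf φ ∪ atomsOf ψ

lemma atomsOf_finite (φ : PropForm α) : (atomsOf φ).Finite := by
  induction φ with
  | atom a => exact Set.finite_singleton a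
  | fls => exact Set.finite_empty
  | impl φ ψ ihφ ihψ => exact ihφ.union ihψ

lemma eval_congr {v w : α → Prop} (φ : PropForm α)
    (h : ∀ a ∈ atomsOf φ, (v a ↔ w a)) : (φ.eval v ↔ φ.eval w) := by
  induction φ with
  | atom a => exact h a rfl
  | fls => exact Iff.rfl
  | impl φ ψ ihφ ihψ =>
    simp only [eval]
    rw [ihφ (fun a ha => h a (Set.mem_union_left _ ha)),
        ihψ (fun a ha => h a (Set.mem_union_right _ ha))]

/-- Satisfiability. -/
def Sat (S : Set (PropForm α)) : Prop := ∃ v : α → Prop, ∀ ψ ∈ S, ψ.eval v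

/-- Finite satisfiability. -/
def FinSat (S : Set (PropForm α)) : Prop := ∀ F ⊆ S, F.Finite → Sat F

lemma finite_subset_chain_union {β : Type} {c : Set (Set β)} (hc : IsChain (· ⊆ ·) c)
    (hne : c.Nonempty) {F : Set β} (hFin : F.Finite) :
    F ⊆ ⋃₀ c → ∃ U ∈ c, F ⊆ U := by
  refine Set.Finite.induction_on F hFin (fun _ => ⟨hne.choose, hne.choose_spec, Set.empty_subset _⟩) ?_
  rintro a s - - ih hsub
  obtain ⟨U, hU, hsU⟩ := ih (fun x hx => hsub (Set.mem_insert_of_mem a hx))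
  obtain ⟨V, hV, haV⟩ := Set.mem_sUnion.mp (hsub (Set.mem_insert a s))
  rcases eq_or_ne U V with rfl | hUV
  · exact ⟨U, hU, Set.insert_subset haV hsU⟩
  rcases hc.total hU hV with h | h
  · exact ⟨V, hV, Set.insert_subset haV (hsU.trans h)⟩
  · exact ⟨U, hU, Set.insert_subset (h haV) hsU⟩

lemma sat_of_finSat {S : Set (PropForm α)} (h : FinSat S) : Sat S := by
  obtain ⟨M, hSM, hM⟩ := zorn_subset_nonempty {U : Set (PropForm α) | FinSat U}
    (fun c hc hchain hne =>
      ⟨⋃₀ c, fun F hF hFin => by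
        obtain ⟨U, hU, hFU⟩ := finite_subset_chain_union hchain hne hFin hF
        exact hc hU F hFU hFin,
       fun s hs => Set.subset_sUnion_of_mem hs⟩) S h
  have hMfs : FinSat M := hM.1
  have hmaxmem : ∀ ψ : PropForm α, FinSat (insert ψ M) → ψ ∈ M := fun ψ hins =>
    hM.2 hins (Set.subset_insert ψ M) (Set.mem_insert ψ M)
  have hcases : ∀ ψ : PropForm α, ψ ∈ M ∨ ψ.neg ∈ M := by
    intro ψ
    by_contra hcon
    push_neg at hcon
    obtain ⟨h1, h2⟩ := hcon
    have i1 : ¬ FinSat (insert ψ M) := fun h => h1 (hmaxmem ψ h)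
    have i2 : ¬ FinSat (insert ψ.neg M) := fun h => h2 (hmaxmem ψ.neg h)
    unfold FinSat at i1 i2
    push_neg at i1 i2
    obtain ⟨F1, hF1, hF1fin, hF1un⟩ := i1
    obtain ⟨F2, hF2, hF2fin, hF2un⟩ := i2
    obtain ⟨v, hv⟩ := hMfs ((F1 \ {ψ}) ∪ (F2 \ {ψ.neg}))
      (Set.union_subset
        (fun x hx => (hF1 hx.1).resolve_left hx.2)
        (fun x hx => (hF2 hx.1).resolve_left hx.2))
      ((hF1fin.subset Set.diff_subset).union (hF2fin.subset Set.diff_subset))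
    by_cases hev : ψ.eval v
    · refine hF1un ⟨v, fun χ hχ => ?_⟩
      by_cases hχψ : χ = ψ
      · exact hχψ ▸ hev
      · exact hv χ (Set.mem_union_left _ ⟨hχ, hχψ⟩)
    · refine hF2un ⟨v, fun χ hχ => ?_⟩
      by_cases hχψ : χ = ψ.neg
      · exact hχψ ▸ hev
      · exact hv χ (Set.mem_union_right _ ⟨hχ, hχψ⟩)
  have hpair : ∀ F : Set (PropForm α), F ⊆ M → F.Finite → ¬ Sat F → False := by
    intro F hF hFin hun
    exact hun (hMfs F hF hFin)
  set v0 : α → Prop := fun a => PropForm.atom a ∈ M with hv0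
  have truth : ∀ φ : PropForm α, (φ ∈ M ↔ φ.eval v0) := by
    intro φ
    induction φ with
    | atom a => exact Iff.rfl
    | fls =>
      constructor
      · intro hfls
        exact hpair {PropForm.fls} (by simpa using hfls) (Set.finite_singleton _)
          (fun ⟨v, hv⟩ => hv _ rfl)
      · intro h; exact absurd h (by simp [eval])
    | impl φ ψ ihφ ihψ =>
      simp only [eval]
      constructor
      · intro h hφv
        have hφM : φ ∈ M := ihφ.mpr hφv
        rw [← ihψ]
        rcases hcases ψ with h' | h'
        · exact h'
        · exfalso
          refine hpair {φ, φ.impl ψ, ψ.neg} ?_ ?_ ?_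
          · rintro x (rfl | rfl | rfl)
            exacts [hφM, h, h']
          · exact (Set.finite_singleton _).insert _ |>.insert _
          · rintro ⟨v, hv⟩
            have e1 : φ.eval v := hv φ (by simp)
            have e2 : (φ.impl ψ).eval v := hv (φ.impl ψ) (by simp)
            have e3 : (ψ.neg).eval v := hv ψ.neg (by simp)
            exact e3 (e2 e1)
      · intro h
        rcases hcases (φ.impl ψ) with h' | h'
        · exact h'
        · exfalso
          by_cases hφM : φ ∈ M
          · have hψM : ψ ∈ M := ihψ.mpr (h (ihφ.mp hφM))
            refine hpair {ψ, (φ.impl ψ).neg} ?_ ?_ ?_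
            · rintro x (rfl | rfl); exacts [hψM, h']
            · exact (Set.finite_singleton _).insert _
            · rintro ⟨v, hv⟩
              have e1 : ψ.eval v := hv ψ (by simp)
              have e2 : ((φ.impl ψ).neg).eval v := hv (φ.impl ψ).neg (by simp)
              exact e2 (fun _ => e1)
          · have hnφ : φ.neg ∈ M := (hcases φ).resolve_left hφM
            refine hpair {φ.neg, (φ.impl ψ).neg} ?_ ?_ ?_
            · rintro x (rfl | rfl); exacts [hnφ, h']
            · exact (Set.finite_singleton _).insert _
            · rintro ⟨v, hv⟩
              have e1 : (φ.neg).eval v := hv φ.neg (by simp)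
              have e2 : ((φ.impl ψ).neg).eval v := hv (φ.impl ψ).neg (by simp)
              exact e2 (fun hφv => absurd hφv e1)
  exact ⟨v0, fun ψ hψ => (truth ψ).mp (hSM hψ)⟩

/-- Compactness for `Cn`. -/
lemma Cn_compact {S : Set (PropForm α)} {φ : PropForm α} (h : φ ∈ Cn S) :
    ∃ F : Set (PropForm α), F ⊆ S ∧ F.Finite ∧ φ ∈ Cn F := by
  by_contra hcon
  push_neg at hcon
  have hfs : FinSat (insert φ.neg S) := by
    intro F hF hFin
    have hF' : F \ {φ.neg} ⊆ S := fun x hx => (hF hx.1).resolve_left hx.2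
    have hnc : φ ∉ Cn (F \ {φ.neg}) := hcon _ hF' (hFin.subset Set.diff_subset)
    simp only [Cn, Set.mem_setOf_eq] at hnc
    push_neg at hnc
    obtain ⟨v, hv, hnv⟩ := hnc
    refine ⟨v, fun ψ hψ => ?_⟩
    by_cases hψeq : ψ = φ.neg
    · subst hψeq; exact hnv
    · exact hv ψ ⟨hψ, hψeq⟩
  obtain ⟨v, hv⟩ := sat_of_finSat hfs
  exact (hv φ.neg (Set.mem_insert _ _)) (h v (fun ψ hψ => hv ψ (Set.mem_insert_of_mem _ hψ)))

/-- Consequents of a list of defaults. -/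
def consSet (L : List (Default α)) : Set (PropForm α) := {φ | ∃ d ∈ L, φ = d.con}

lemma consSet_nil : consSet ([] : List (Default α)) = ∅ := by
  simp [consSet]

lemma consSet_cons (d : Default α) (L : List (Default α)) :
    consSet (d :: L) = insert d.con (consSet L) := by
  ext φ; simp [consSet, List.mem_cons, or_and_right, exists_or]

lemma consSet_append (L₁ L₂ : List (Default α)) :
    consSet (L₁ ++ L₂) = consSet L₁ ∪ consSet L₂ := by
  ext φ; simp [consSet, List.mem_append, or_and_right, exists_or]

/-- Groundedness of a list of rule applications over `W`, starting from assumptions `C`. -/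
def GFrom (W : Set (PropForm α)) : Set (PropForm α) → List (Default α) → Prop
  | _, [] => True
  | C, d :: L => d.pre ∈ Cn (W ∪ C) ∧ GFrom W (insert d.con C) L

lemma GFrom_mono {W : Set (PropForm α)} :
    ∀ (L : List (Default α)) {C C' : Set (PropForm α)}, C ⊆ C' → GFrom W C L → GFrom W C' L
  | [], _, _, _, _ => trivial
  | _ :: L, _, _, h, ⟨h1, h2⟩ =>
    ⟨Cn_mono (Set.union_subset_union_right W h) h1,
     GFrom_mono L (Set.insert_subset_insert h) h2⟩

lemma GFrom_append {W : Set (PropForm α)} :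
    ∀ (L₁ L₂ : List (Default α)) {C : Set (PropForm α)},
      GFrom W C L₁ → GFrom W C L₂ → GFrom W C (L₁ ++ L₂)
  | [], _, _, _, h₂ => h₂
  | _ :: L₁, L₂, _, ⟨h1, h2⟩, h₂ =>
    ⟨h1, GFrom_append L₁ L₂ h2 (GFrom_mono L₂ (Set.subset_insert _ _) h₂)⟩

lemma GFrom_snoc {W : Set (PropForm α)} :
    ∀ (L : List (Default α)) {C : Set (PropForm α)} (d : Default α),
      GFrom W C L → d.pre ∈ Cn (W ∪ (C ∪ consSet L)) → GFrom W C (L ++ [d])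
  | [], C, d, _, h =>
    ⟨Cn_mono (by rw [consSet_nil, Set.union_empty]) h, trivial⟩
  | e :: L, C, d, ⟨h1, h2⟩, h => by
    refine ⟨h1, GFrom_snoc L d h2 (Cn_mono (Set.union_subset_union_right W ?_) h)⟩
    rw [consSet_cons]
    rintro x (hx | hx)
    · exact Or.inl (Set.mem_insert_of_mem _ hx)
    · rcases hx with rfl | hx
      · exact Or.inl (Set.mem_insert _ _)
      · exact Or.inr hx

lemma CnRules_subset {B : Set (PropForm α × PropForm α)} {W S : Set (PropForm α)}
    (h1 : W ⊆ S) (h2 : Cn S ⊆ S) (h3 : ∀ r ∈ B, r.1 ∈ S → r.2 ∈ S) :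
    CnRules B W ⊆ S :=
  Set.sInter_subset_of_mem ⟨h1, h2, h3⟩

lemma CnRules_closed (B : Set (PropForm α × PropForm α)) (W : Set (PropForm α)) :
    W ⊆ CnRules B W ∧ Cn (CnRules B W) ⊆ CnRules B W ∧
      ∀ r ∈ B, r.1 ∈ CnRules B W → r.2 ∈ CnRules B W := by
  refine ⟨?_, ?_, ?_⟩
  · intro φ hφ
    exact Set.mem_sInter.mpr (fun T hT => hT.1 hφ)
  · intro φ hφ
    refine Set.mem_sInter.mpr (fun T hT => ?_)
    exact hT.2.1 (Cn_mono (Set.sInter_subset_of_mem hT) hφ)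
  · intro r hr h1
    refine Set.mem_sInter.mpr (fun T hT => ?_)
    exact hT.2.2 r hr (Set.mem_sInter.mp h1 T hT)

/-- From membership in an extension, extract a finite grounded derivation. -/
lemma extraction {D : Set (Default α)} {W S0 : Set (PropForm α)}
    (hS0 : S0 = CnRules (Reduct D S0) W) {φ : PropForm α} (hφ : φ ∈ S0) :
    ∃ L : List (Default α), (∀ d ∈ L, d ∈ D ∧ d.Applicable S0) ∧ GFrom W ∅ L ∧
      φ ∈ Cn (W ∪ consSet L) := by
  set P : Set (PropForm α) :=
    {ψ | ∃ L : List (Default α), (∀ d ∈ L, d ∈ D ∧ d.Applicable S0) ∧ GFrom W ∅ L ∧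
      ψ ∈ Cn (W ∪ consSet L)} with hP
  have comb : ∀ F : Set (PropForm α), F.Finite → F ⊆ P →
      ∃ L : List (Default α), (∀ d ∈ L, d ∈ D ∧ d.Applicable S0) ∧ GFrom W ∅ L ∧
        F ⊆ Cn (W ∪ consSet L) := by
    intro F hFfin
    refine Set.Finite.induction_on F hFfin
      (fun _ => ⟨[], fun d hd => absurd hd List.not_mem_nil, trivial, Set.empty_subset _⟩) ?_
    rintro a s - - ih hsub
    obtain ⟨L₁, hL₁, hg₁, hs₁⟩ := ih (fun x hx => hsub (Set.mem_insert_of_mem a hx))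
    obtain ⟨L₂, hL₂, hg₂, ha₂⟩ := hsub (Set.mem_insert a s)
    refine ⟨L₁ ++ L₂, ?_, GFrom_append L₁ L₂ hg₁ hg₂, ?_⟩
    · intro d hd
      rcases List.mem_append.mp hd with h | h
      exacts [hL₁ d h, hL₂ d h]
    · intro x hx
      rcases Set.mem_insert_iff.mp hx with rfl | hx
      · refine Cn_mono ?_ ha₂
        rw [consSet_append]
        exact Set.union_subset_union_right W Set.subset_union_right
      · refine Cn_mono ?_ (hs₁ hx)
        rw [consSet_append]
        exact Set.union_subset_union_right W Set.subset_union_left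
  have key : CnRules (Reduct D S0) W ⊆ P := by
    refine CnRules_subset ?_ ?_ ?_
    · intro ψ hψ
      exact ⟨[], fun d hd => absurd hd List.not_mem_nil, trivial,
        subset_Cn _ (Set.mem_union_left _ hψ)⟩
    · intro ψ hψ
      obtain ⟨F, hFP, hFfin, hψF⟩ := Cn_compact hψ
      obtain ⟨L, hL, hg, hF⟩ := comb F hFfin hFP
      exact ⟨L, hL, hg, Cn_Cn _ (Cn_mono hF hψF)⟩
    · rintro r ⟨d, hdD, hdapp, rfl⟩ h1
      obtain ⟨L, hL, hg, hpre⟩ := h1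
      refine ⟨L ++ [d], ?_, ?_, ?_⟩
      · intro e he
        rcases List.mem_append.mp he with h | h
        · exact hL e h
        · rw [List.mem_singleton] at h
          exact h ▸ ⟨hdD, hdapp⟩
      · refine GFrom_snoc L d hg (Cn_mono ?_ hpre)
        rw [Set.empty_union]
      · refine subset_Cn _ (Set.mem_union_right _ ?_)
        exact ⟨d, by simp, rfl⟩
  have hφ' : φ ∈ CnRules (Reduct D S0) W := by rw [← hS0]; exact hφ
  exact key hφ'

/-- A grounded list of applicable defaults derives its consequents inside `CnRules`. -/
lemma derive_in_CnRules {D : Set (Default α)} {W S : Set (PropForm α)} :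
    ∀ (L : List (Default α)) (C : Set (PropForm α)),
      (∀ d ∈ L, d ∈ D ∧ d.Applicable S) → C ⊆ CnRules (Reduct D S) W → GFrom W C L →
      consSet L ⊆ CnRules (Reduct D S) W := by
  intro L
  induction L with
  | nil => intro C _ _ _; rw [consSet_nil]; exact Set.empty_subset _
  | cons d L ih =>
    intro C hmem hC hg
    obtain ⟨h1, h2⟩ := hg
    obtain ⟨c1, c2, c3⟩ := CnRules_closed (Reduct D S) W
    have hpre : d.pre ∈ CnRules (Reduct D S) W :=
      c2 (Cn_mono (Set.union_subset c1 hC) h1)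
    have hd := hmem d List.mem_cons_self
    have hdcon : d.con ∈ CnRules (Reduct D S) W :=
      c3 (d.pre, d.con) ⟨d, hd.1, hd.2, rfl⟩ hpre
    have hrest := ih (insert d.con C) (fun e he => hmem e (List.mem_cons_of_mem d he))
      (Set.insert_subset hdcon hC) h2
    rw [consSet_cons]
    exact Set.insert_subset hdcon hrest

lemma not_mem_Cn_atom {a b : α} (hab : a ≠ b) :
    PropForm.atom a ∉ Cn {PropForm.atom b} := by
  intro h
  have := h (fun x => x = b) (by rintro ψ rfl; rfl)
  exact hab this

lemma applicable_transfer {d : Default α} {b c : α}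
    (h : d.Applicable (Cn {PropForm.atom b}))
    (hc : ∀ γ ∈ d.jus, c ∉ atomsOf γ) :
    d.Applicable (Cn {PropForm.atom c}) := by
  intro γ hγ
  rw [Cn_idem]
  have h' := h γ hγ
  rw [Cn_idem] at h'
  intro hmem
  simp only [Cn, Set.mem_setOf_eq] at h'
  push_neg at h'
  obtain ⟨v, hv, hnv⟩ := h'
  have hγv : γ.eval v := not_not.mp hnv
  set w : α → Prop := fun x => x = c ∨ v x with hw
  have hγw : γ.eval w := by
    rw [← eval_congr γ (fun a ha => ?_)]
    · exact hγv
    · have hac : a ≠ c := fun h'' => hc γ hγ (h'' ▸ ha)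
      simp [hw, hac]
  have := hmem w (by rintro ψ rfl; exact Or.inl rfl)
  exact this hγw

end Aux

/-- the family `{ Cn({p_i}) : i ∈ ℕ }` is a countable family of finitely
generated non-including theories that is not representable by any default theory. -/
theorem atoms_family_not_representable {α : Type} [Denumerable α]
    (p : ℕ → α) (hp : Function.Injective p)
    (𝒯 : Set (Set (PropForm α)))
    (h𝒯 : 𝒯 = {T | ∃ i : ℕ, T = Cn {PropForm.atom (p i)}}) :
    𝒯.Countable ∧
    (∀ T ∈ 𝒯, IsTheory T ∧ ∃ F : Finset (PropForm α), T = Cn ↑F) ∧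
    (∀ T ∈ 𝒯, ∀ T' ∈ 𝒯, T ⊆ T' → T = T') ∧
    ¬ ∃ (D : Set (Default α)) (W : Set (PropForm α)), ext D W = 𝒯 := by
  refine ⟨?_, ?_, ?_, ?_⟩
  · -- countable
    have hr : 𝒯 = Set.range (fun i : ℕ => Cn {PropForm.atom (p i)}) := by
      rw [h𝒯]; ext T; simp [Set.range, eq_comm]
    rw [hr]
    exact Set.countable_range _
  · -- theories, finitely generated
    intro T hT
    rw [h𝒯] at hT
    obtain ⟨i, rfl⟩ := hT
    refine ⟨Cn_Cn _, ⟨{PropForm.atom (p i)}, ?_⟩⟩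
    rw [Finset.coe_singleton]
  · -- non-including
    intro T hT T' hT' hsub
    rw [h𝒯] at hT hT'
    obtain ⟨i, rfl⟩ := hT
    obtain ⟨j, rfl⟩ := hT'
    by_cases hij : p i = p j
    · rw [hij]
    · exfalso
      exact not_mem_Cn_atom hij (hsub (subset_Cn _ rfl))
  · -- not representable
    rintro ⟨D, W, hDW⟩
    have hmem0 : Cn {PropForm.atom (p 0)} ∈ 𝒯 := by rw [h𝒯]; exact ⟨0, rfl⟩
    have hext0 : IsExtension D W (Cn {PropForm.atom (p 0)}) := by
      rw [← hDW] at hmem0; exact hmem0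
    have hp0 : PropForm.atom (p 0) ∈ Cn {PropForm.atom (p 0)} := subset_Cn _ rfl
    obtain ⟨L, hL, hg, hder⟩ := extraction hext0 hp0
    -- choose a fresh index i
    set A : Set α := ⋃ d ∈ {d : Default α | d ∈ L}, ⋃ γ ∈ (↑d.jus : Set (PropForm α)), atomsOf γ
      with hA
    have hAfin : A.Finite :=
      (List.finite_toSet L).biUnion
        (fun d _ => (d.jus.finite_toSet).biUnion (fun γ _ => atomsOf_finite γ))
    have hfin2 : ({0} ∪ p ⁻¹' A : Set ℕ).Finite :=
      (Set.finite_singleton 0).union (hAfin.preimage hp.injOn)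
    obtain ⟨i, hi⟩ := hfin2.infinite_compl.nonempty
    rw [Set.mem_compl_iff, Set.mem_union, not_or] at hi
    obtain ⟨hi0, hiA⟩ := hi
    have hi0' : (0 : ℕ) ≠ i := fun h => hi0 (h ▸ rfl)
    have hmemi : Cn {PropForm.atom (p i)} ∈ 𝒯 := by rw [h𝒯]; exact ⟨i, rfl⟩
    have hexti : IsExtension D W (Cn {PropForm.atom (p i)}) := by
      rw [← hDW] at hmemi; exact hmemi
    -- transplant the derivation
    have hLi : ∀ d ∈ L, d ∈ D ∧ d.Applicable (Cn {PropForm.atom (p i)}) := by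
      intro d hd
      refine ⟨(hL d hd).1, applicable_transfer (hL d hd).2 ?_⟩
      intro γ hγ hcγ
      apply hiA
      refine Set.mem_preimage.mpr ?_
      rw [hA]
      exact Set.mem_biUnion hd (Set.mem_biUnion (by exact_mod_cast hγ) hcγ)
    have hcons : consSet L ⊆ CnRules (Reduct D (Cn {PropForm.atom (p i)})) W :=
      derive_in_CnRules L ∅ hLi (Set.empty_subset _) hg
    obtain ⟨c1, c2, _⟩ := CnRules_closed (Reduct D (Cn {PropForm.atom (p i)})) W
    have hfinal : PropForm.atom (p 0) ∈ CnRules (Reduct D (Cn {PropForm.atom (p i)})) W :=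
      c2 (Cn_mono (Set.union_subset c1 hcons) hder)
    have hbad : PropForm.atom (p 0) ∈ Cn {PropForm.atom (p i)} := by
      rw [hexti]; exact hfinal
    exact not_mem_Cn_atom (fun h => hi0' (hp h)) hbad
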